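/- arXiv:0705.3440 — 3 statements merged into one kernel-verified Lean document; each statement's English description precedes it below -/
import Mathlib

section
/- Let A be a commutative ring with Poisson bracket {·,·}, let Θ¹,…,Θᵏ ∈ A with C^{ab} = {Θᵃ,Θᵇ} invertible with inverse C_{ab}, and define the Dirac bracket {F,G}_D = {F,G} − Σ {F,Θᵃ} C_{ab} {Θᵇ,G}. Then {·,·}_D is again a Poisson bracket: it is antisymmetric, a biderivation, and satisfies the Jacobi identity Σ_{cycl F,G,H} {{F,G}_D, H}_D = 0 (holding identically in A, i.e. strongly). -/
namespace Stmt6Aux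

variable {A : Type*} [CommRing A] {k : ℕ}

section
variable (B : A → A → A) (Θ : Fin k → A) (K : Matrix (Fin k) (Fin k) A)

/-- `X̃ b = ∑ a, B X (Θ a) * K a b` -/
def Tt (X : A) (b : Fin k) : A := ∑ a, B X (Θ a) * K a b

def bil (X Y : A) : A := ∑ a, ∑ b, B X (Θ a) * K a b * B Y (Θ b)

def P1 (X Y Z : A) : A := ∑ a, ∑ b, B X (B Y (Θ a)) * K a b * B Z (Θ b)

def NN (X Y Z : A) : A := ∑ c, ∑ d, Tt B Θ K Y c * B X (B (Θ c) (Θ d)) * Tt B Θ K Z d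

def QQ (X Y Z : A) : A := ∑ b, ∑ c, Tt B Θ K Y b * B (Θ b) (B X (Θ c)) * Tt B Θ K Z c

def RR (X Y Z : A) : A :=
  ∑ b, ∑ e, ∑ f, Tt B Θ K X b * Tt B Θ K Y e * Tt B Θ K Z f * B (Θ b) (B (Θ e) (Θ f))

end

section basic
variable {B : A → A → A}
  (hanti : ∀ a b, B a b = -B b a)
  (hadd : ∀ a b c, B (a + b) c = B a c + B b c)
  (hleib : ∀ a b c, B a (b * c) = B a b * c + b * B a c)

include hadd in
lemma Bzero_left (c : A) : B 0 c = 0 := by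
  have := hadd 0 0 c; simp at this; exact this

include hanti hadd in
lemma Bzero_right (a : A) : B a 0 = 0 := by
  rw [hanti, Bzero_left hadd, neg_zero]

include hanti hadd in
lemma Badd_right (a b c : A) : B a (b + c) = B a b + B a c := by
  rw [hanti, hadd, hanti b a, hanti c a]; ring

include hanti hadd in
lemma Bneg_right (a b : A) : B a (-b) = -B a b := by
  have := Badd_right hanti hadd a b (-b)
  simp [Bzero_right hanti hadd] at this
  linear_combination -this

include hanti hadd in
lemma Bsum_right (a : A) (s : Finset (Fin k)) (f : Fin k → A) :
    B a (∑ i ∈ s, f i) = ∑ i ∈ s, B a (f i) := by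
  induction s using Finset.cons_induction with
  | empty => simp [Bzero_right hanti hadd]
  | cons i s hi ih => rw [Finset.sum_cons, Badd_right hanti hadd, ih, Finset.sum_cons]

include hleib in
lemma Bone_right (a : A) : B a 1 = 0 := by
  have := hleib a 1 1; simp at this; exact this

include hleib in
lemma Bmul3_right (a x y z : A) :
    B a (x * y * z) = B a x * y * z + x * B a y * z + x * y * B a z := by
  rw [hleib, hleib]; ring

end basic


lemma sum_rot3 {M : Type*} [AddCommMonoid M] (g : Fin k → Fin k → Fin k → M) :
    (∑ a, ∑ b, ∑ c, g a b c) = ∑ b, ∑ c, ∑ a, g a b c := by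
  rw [Finset.sum_comm]
  exact Finset.sum_congr rfl fun b _ => Finset.sum_comm

lemma entry_mul (M N : Matrix (Fin k) (Fin k) A) (h : M * N = 1) :
    ∀ a b, (∑ c, M a c * N c b) = if a = b then (1:A) else 0 := by
  intro a b
  have := congrFun (congrFun h a) b
  rwa [Matrix.mul_apply, Matrix.one_apply] at this

section inv
variable {B : A → A → A} {Θ : Fin k → A} {C Cinv : Matrix (Fin k) (Fin k) A}
  (hanti : ∀ a b, B a b = -B b a)
  (hadd : ∀ a b c, B (a + b) c = B a c + B b c)
  (hleib : ∀ a b c, B a (b * c) = B a b * c + b * B a c)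
  (hC : ∀ a b, C a b = B (Θ a) (Θ b))
  (hCinv : C * Cinv = 1) (hCinv' : Cinv * C = 1)

include hanti hC hCinv' in
lemma Kanti : ∀ a b, Cinv a b = -Cinv b a := by
  have hCT : C.transpose = -C := by
    ext a b
    simp only [Matrix.transpose_apply, Matrix.neg_apply, hC]
    exact hanti _ _
  have h1 : C * Cinv.transpose = -1 := by
    have h := congrArg Matrix.transpose hCinv'
    rw [Matrix.transpose_mul, Matrix.transpose_one, hCT, neg_mul] at h
    exact neg_eq_iff_eq_neg.mp h
  have h2 : Cinv = -Cinv.transpose := by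
    calc Cinv = Cinv * 1 := (mul_one _).symm
    _ = Cinv * (C * -Cinv.transpose) := by rw [mul_neg, h1, neg_neg]
    _ = (Cinv * C) * -Cinv.transpose := by rw [mul_assoc]
    _ = -Cinv.transpose := by rw [hCinv', one_mul]
  intro a b
  have := congrFun (congrFun h2 a) b
  simpa [Matrix.neg_apply, Matrix.transpose_apply] using this

include hanti hadd hleib hC hCinv hCinv' in
lemma dK (X : A) (a e : Fin k) :
    B X (Cinv a e) = -∑ d, ∑ c, Cinv a c * B X (B (Θ c) (Θ d)) * Cinv d e := by
  have hKC := entry_mul Cinv C hCinv'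
  have hCK := entry_mul C Cinv hCinv
  have step : ∀ d, (∑ c, B X (Cinv a c) * C c d) + (∑ c, Cinv a c * B X (C c d)) = 0 := by
    intro d
    have h0 := congrArg (B X) (hKC a d)
    rw [Bsum_right hanti hadd] at h0
    rw [Finset.sum_congr rfl (fun c _ => hleib X (Cinv a c) (C c d))] at h0
    rw [Finset.sum_add_distrib] at h0
    have hrhs : B X (if a = d then (1:A) else 0) = 0 := by
      split
      · exact Bone_right hleib X
      · exact Bzero_right hanti hadd X
    rw [hrhs] at h0
    exact h0
  have key : B X (Cinv a e) = -∑ d, ∑ c, Cinv a c * B X (C c d) * Cinv d e := by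
    calc B X (Cinv a e)
        = ∑ c, B X (Cinv a c) * (if c = e then (1:A) else 0) := by
          simp [mul_ite, mul_one, mul_zero, Finset.sum_ite_eq']
    _ = ∑ c, B X (Cinv a c) * (∑ d, C c d * Cinv d e) := by
          exact Finset.sum_congr rfl fun c _ => by rw [hCK c e]
    _ = ∑ c, ∑ d, B X (Cinv a c) * C c d * Cinv d e := by
          simp [Finset.mul_sum, mul_assoc]
    _ = ∑ d, ∑ c, B X (Cinv a c) * C c d * Cinv d e := Finset.sum_comm
    _ = ∑ d, (∑ c, B X (Cinv a c) * C c d) * Cinv d e := by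
          simp [Finset.sum_mul]
    _ = ∑ d, (-(∑ c, Cinv a c * B X (C c d))) * Cinv d e := by
          refine Finset.sum_congr rfl fun d _ => ?_
          have := step d
          congr 1
          linear_combination this
    _ = -∑ d, ∑ c, Cinv a c * B X (C c d) * Cinv d e := by
          simp [Finset.sum_mul, neg_mul]
  rw [key]
  congr 1
  exact Finset.sum_congr rfl fun d _ => Finset.sum_congr rfl fun c _ => by rw [hC]

end inv

section main
variable {B : A → A → A} {Θ : Fin k → A} {C Cinv : Matrix (Fin k) (Fin k) A}
  (hanti : ∀ a b, B a b = -B b a)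
  (hadd : ∀ a b c, B (a + b) c = B a c + B b c)
  (hleib : ∀ a b c, B a (b * c) = B a b * c + b * B a c)
  (hjac : ∀ a b c, B a (B b c) + B b (B c a) + B c (B a b) = 0)
  (hC : ∀ a b, C a b = B (Θ a) (Θ b))
  (hCinv : C * Cinv = 1) (hCinv' : Cinv * C = 1)

lemma sum_mul_sum3 (x y : Fin k → A) (w : A) :
    (∑ a, x a) * w * (∑ b, y b) = ∑ a, ∑ b, x a * w * y b := by
  rw [Finset.sum_mul, Finset.sum_mul]
  exact Finset.sum_congr rfl fun a _ => by rw [Finset.mul_sum]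

include hanti hadd hleib hC hCinv hCinv' in
lemma Bbil (X G H : A) :
    B X (bil B Θ Cinv G H) = P1 B Θ Cinv X G H + NN B Θ Cinv X G H - P1 B Θ Cinv X H G := by
  have kk := Kanti hanti hC hCinv'
  have e1 : B X (bil B Θ Cinv G H)
      = (∑ a, ∑ b, B X (B G (Θ a)) * Cinv a b * B H (Θ b))
      + ((∑ a, ∑ b, B G (Θ a) * B X (Cinv a b) * B H (Θ b))
      + (∑ a, ∑ b, B G (Θ a) * Cinv a b * B X (B H (Θ b)))) := by
    unfold bil
    rw [Bsum_right hanti hadd]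
    have h1 : ∀ a : Fin k, B X (∑ b, B G (Θ a) * Cinv a b * B H (Θ b))
        = ∑ b, (B X (B G (Θ a)) * Cinv a b * B H (Θ b)
              + (B G (Θ a) * B X (Cinv a b) * B H (Θ b)
              + B G (Θ a) * Cinv a b * B X (B H (Θ b)))) := by
      intro a
      rw [Bsum_right hanti hadd]
      refine Finset.sum_congr rfl fun b _ => ?_
      rw [Bmul3_right hleib X _ _ _]; ring
    rw [Finset.sum_congr rfl fun a _ => h1 a]
    simp only [Finset.sum_add_distrib]
  have e3 : (∑ a, ∑ b, B G (Θ a) * Cinv a b * B X (B H (Θ b)))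
      = -P1 B Θ Cinv X H G := by
    rw [Finset.sum_comm]
    unfold P1
    rw [show -(∑ a, ∑ b, B X (B H (Θ a)) * Cinv a b * B G (Θ b))
        = ∑ a, ∑ b, -(B X (B H (Θ a)) * Cinv a b * B G (Θ b)) by simp]
    refine Finset.sum_congr rfl fun x _ => Finset.sum_congr rfl fun y _ => ?_
    rw [kk y x]; ring
  have e2 : (∑ a, ∑ b, B G (Θ a) * B X (Cinv a b) * B H (Θ b)) = NN B Θ Cinv X G H := by
    have step1 : (∑ a, ∑ b, B G (Θ a) * B X (Cinv a b) * B H (Θ b))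
        = ∑ a, ∑ b, ∑ d, ∑ c,
            B G (Θ a) * (-(Cinv a c * B X (B (Θ c) (Θ d)) * Cinv d b)) * B H (Θ b) := by
      refine Finset.sum_congr rfl fun a _ => Finset.sum_congr rfl fun b _ => ?_
      rw [dK hanti hadd hleib hC hCinv hCinv' X a b]
      simp [Finset.mul_sum, Finset.sum_mul]
    rw [step1]
    rw [Finset.sum_congr rfl fun a _ => sum_rot3 _]
    rw [sum_rot3 (fun a d c => ∑ b,
          B G (Θ a) * (-(Cinv a c * B X (B (Θ c) (Θ d)) * Cinv d b)) * B H (Θ b))]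
    rw [Finset.sum_comm]
    unfold NN Tt
    refine Finset.sum_congr rfl fun c _ => Finset.sum_congr rfl fun d _ => ?_
    rw [sum_mul_sum3]
    refine Finset.sum_congr rfl fun a _ => Finset.sum_congr rfl fun b _ => ?_
    rw [kk d b]; ring
  rw [e1, e2, e3]; unfold P1; ring

include hanti hC hCinv' in
lemma bil_antisym (F G : A) : bil B Θ Cinv F G = -bil B Θ Cinv G F := by
  have kk := Kanti hanti hC hCinv'
  unfold bil
  rw [Finset.sum_comm, show -(∑ a, ∑ b, B G (Θ a) * Cinv a b * B F (Θ b))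
      = ∑ a, ∑ b, -(B G (Θ a) * Cinv a b * B F (Θ b)) by simp]
  refine Finset.sum_congr rfl fun x _ => Finset.sum_congr rfl fun y _ => ?_
  rw [kk y x]; ring

include hanti hleib in
lemma hleib_left (a b c : A) : B (a * b) c = B a c * b + a * B b c := by
  rw [hanti (a*b) c, hleib, hanti a c, hanti b c]; ring

include hanti hleib in
lemma bil_mul_right (F G H : A) :
    bil B Θ Cinv F (G * H) = bil B Θ Cinv F G * H + G * bil B Θ Cinv F H := by
  unfold bil
  simp only [Finset.sum_mul, Finset.mul_sum, ← Finset.sum_add_distrib]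
  refine Finset.sum_congr rfl fun a _ => Finset.sum_congr rfl fun b _ => ?_
  rw [hleib_left hanti hleib G H (Θ b)]; ring

lemma bilT (F Y : A) : bil B Θ Cinv F Y = ∑ b, Tt B Θ Cinv F b * B Y (Θ b) := by
  unfold bil Tt
  rw [Finset.sum_comm]
  refine Finset.sum_congr rfl fun b _ => ?_
  rw [Finset.sum_mul]

include hanti hC hCinv' in
lemma TP (F : A) (u : Fin k → A) :
    (∑ b, Tt B Θ Cinv F b * u b) = -∑ a, ∑ b, u a * Cinv a b * B F (Θ b) := by
  have kk := Kanti hanti hC hCinv'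
  unfold Tt
  rw [show -(∑ a, ∑ b, u a * Cinv a b * B F (Θ b))
      = ∑ a, ∑ b, -(u a * Cinv a b * B F (Θ b)) by simp]
  refine Finset.sum_congr rfl fun x _ => ?_
  rw [Finset.sum_mul]
  refine Finset.sum_congr rfl fun y _ => ?_
  rw [kk y x]; ring

include hanti hadd hjac hC hCinv' in
lemma fact_i (F G H : A) :
    (∑ b, Tt B Θ Cinv F b * B (Θ b) (B G H))
      = P1 B Θ Cinv G H F - P1 B Θ Cinv H G F := by
  have hb : ∀ b : Fin k, B (Θ b) (B G H) = -(B G (B H (Θ b))) + B H (B G (Θ b)) := by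
    intro b
    have hj := hjac (Θ b) G H
    have h1 : B H (B (Θ b) G) = -B H (B G (Θ b)) := by
      rw [hanti (Θ b) G, Bneg_right hanti hadd]
    linear_combination hj - h1
  calc (∑ b, Tt B Θ Cinv F b * B (Θ b) (B G H))
      = (∑ b, Tt B Θ Cinv F b * -(B G (B H (Θ b))))
        + (∑ b, Tt B Θ Cinv F b * B H (B G (Θ b))) := by
        rw [← Finset.sum_add_distrib]
        refine Finset.sum_congr rfl fun b _ => ?_
        rw [hb b]; ring
  _ = -(∑ b, Tt B Θ Cinv F b * B G (B H (Θ b)))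
        + (∑ b, Tt B Θ Cinv F b * B H (B G (Θ b))) := by
        simp [mul_neg]
  _ = P1 B Θ Cinv G H F - P1 B Θ Cinv H G F := by
        rw [TP hanti hC hCinv' F (fun b => B G (B H (Θ b))),
            TP hanti hC hCinv' F (fun b => B H (B G (Θ b)))]
        unfold P1; ring

include hanti hC hCinv' in
lemma fact_ii (F G H : A) :
    (∑ b, Tt B Θ Cinv F b * P1 B Θ Cinv (Θ b) G H) = -QQ B Θ Cinv G F H := by
  have kk := Kanti hanti hC hCinv'
  have lhs : (∑ b, Tt B Θ Cinv F b * P1 B Θ Cinv (Θ b) G H)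
      = ∑ b, ∑ a, ∑ c, Tt B Θ Cinv F b * (B (Θ b) (B G (Θ a)) * Cinv a c * B H (Θ c)) := by
    refine Finset.sum_congr rfl fun b _ => ?_
    unfold P1
    rw [Finset.mul_sum]
    exact Finset.sum_congr rfl fun a _ => Finset.mul_sum _ _ _
  have rhs : QQ B Θ Cinv G F H
      = ∑ b, ∑ a, ∑ c, Tt B Θ Cinv F b * (B (Θ b) (B G (Θ a))) * (B H (Θ c) * Cinv c a) := by
    unfold QQ Tt
    refine Finset.sum_congr rfl fun b _ => Finset.sum_congr rfl fun a _ => ?_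
    rw [Finset.mul_sum]
  rw [lhs, rhs]
  rw [show -(∑ b, ∑ a, ∑ c, Tt B Θ Cinv F b * (B (Θ b) (B G (Θ a))) * (B H (Θ c) * Cinv c a))
      = ∑ b, ∑ a, ∑ c, -(Tt B Θ Cinv F b * (B (Θ b) (B G (Θ a))) * (B H (Θ c) * Cinv c a)) by simp]
  refine Finset.sum_congr rfl fun b _ => Finset.sum_congr rfl fun a _ =>
    Finset.sum_congr rfl fun c _ => ?_
  rw [kk a c]; ring

lemma fact_iii (F G H : A) :
    (∑ b, Tt B Θ Cinv F b * NN B Θ Cinv (Θ b) G H) = RR B Θ Cinv F G H := by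
  unfold NN RR
  refine Finset.sum_congr rfl fun b _ => ?_
  rw [Finset.mul_sum]
  refine Finset.sum_congr rfl fun c _ => ?_
  rw [Finset.mul_sum]
  refine Finset.sum_congr rfl fun d _ => ?_
  ring

include hanti hadd hjac in
lemma NQ (X Y Z : A) :
    NN B Θ Cinv X Y Z = QQ B Θ Cinv X Y Z - QQ B Θ Cinv X Z Y := by
  have hb : ∀ c d : Fin k,
      B X (B (Θ c) (Θ d)) = B (Θ c) (B X (Θ d)) - B (Θ d) (B X (Θ c)) := by
    intro c d
    have hj := hjac X (Θ c) (Θ d)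
    have h1 : B (Θ c) (B (Θ d) X) = -B (Θ c) (B X (Θ d)) := by
      rw [hanti (Θ d) X, Bneg_right hanti hadd]
    linear_combination hj - h1
  have split : NN B Θ Cinv X Y Z
      = (∑ c, ∑ d, Tt B Θ Cinv Y c * B (Θ c) (B X (Θ d)) * Tt B Θ Cinv Z d)
      - (∑ c, ∑ d, Tt B Θ Cinv Y c * B (Θ d) (B X (Θ c)) * Tt B Θ Cinv Z d) := by
    unfold NN
    rw [← Finset.sum_sub_distrib]
    refine Finset.sum_congr rfl fun c _ => ?_
    rw [← Finset.sum_sub_distrib]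
    refine Finset.sum_congr rfl fun d _ => ?_
    rw [hb c d]; ring
  rw [split]
  have h2 : (∑ c, ∑ d, Tt B Θ Cinv Y c * B (Θ d) (B X (Θ c)) * Tt B Θ Cinv Z d)
      = QQ B Θ Cinv X Z Y := by
    rw [Finset.sum_comm]
    unfold QQ
    refine Finset.sum_congr rfl fun x _ => Finset.sum_congr rfl fun y _ => ?_
    ring
  rw [h2]
  rfl

include hjac in
lemma Rcyc (F G H : A) :
    RR B Θ Cinv F G H + RR B Θ Cinv G H F + RR B Θ Cinv H F G = 0 := by
  have h1 : RR B Θ Cinv G H F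
      = ∑ b, ∑ e, ∑ f, Tt B Θ Cinv F b * Tt B Θ Cinv G e * Tt B Θ Cinv H f
          * B (Θ e) (B (Θ f) (Θ b)) := by
    unfold RR
    rw [sum_rot3 (fun x y z => Tt B Θ Cinv G x * Tt B Θ Cinv H y * Tt B Θ Cinv F z
          * B (Θ x) (B (Θ y) (Θ z)))]
    rw [sum_rot3 (fun y z x => Tt B Θ Cinv G x * Tt B Θ Cinv H y * Tt B Θ Cinv F z
          * B (Θ x) (B (Θ y) (Θ z)))]
    refine Finset.sum_congr rfl fun b _ => Finset.sum_congr rfl fun e _ =>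
      Finset.sum_congr rfl fun f _ => ?_
    ring
  have h2 : RR B Θ Cinv H F G
      = ∑ b, ∑ e, ∑ f, Tt B Θ Cinv F b * Tt B Θ Cinv G e * Tt B Θ Cinv H f
          * B (Θ f) (B (Θ b) (Θ e)) := by
    unfold RR
    rw [sum_rot3 (fun x y z => Tt B Θ Cinv H x * Tt B Θ Cinv F y * Tt B Θ Cinv G z
          * B (Θ x) (B (Θ y) (Θ z)))]
    refine Finset.sum_congr rfl fun b _ => Finset.sum_congr rfl fun e _ =>
      Finset.sum_congr rfl fun f _ => ?_
    ring
  rw [h1, h2]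
  unfold RR
  simp only [← Finset.sum_add_distrib]
  refine Finset.sum_eq_zero fun b _ => Finset.sum_eq_zero fun e _ =>
    Finset.sum_eq_zero fun f _ => ?_
  linear_combination (Tt B Θ Cinv F b * Tt B Θ Cinv G e * Tt B Θ Cinv H f)
    * hjac (Θ b) (Θ e) (Θ f)

include hanti hadd hleib hjac hC hCinv hCinv' in
lemma keyD (F G H : A) :
    B F (B G H + bil B Θ Cinv G H) + bil B Θ Cinv F (B G H + bil B Θ Cinv G H)
    = B F (B G H)
      + P1 B Θ Cinv F G H - P1 B Θ Cinv F H G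
      - P1 B Θ Cinv G H F + P1 B Θ Cinv H G F
      + NN B Θ Cinv F G H
      + QQ B Θ Cinv G F H - QQ B Θ Cinv H F G
      - RR B Θ Cinv F G H := by
  have part1 : B F (B G H + bil B Θ Cinv G H)
      = B F (B G H) + (P1 B Θ Cinv F G H + NN B Θ Cinv F G H - P1 B Θ Cinv F H G) := by
    rw [Badd_right hanti hadd, Bbil hanti hadd hleib hC hCinv hCinv']
  have part2 : bil B Θ Cinv F (B G H + bil B Θ Cinv G H)
      = -(∑ b, Tt B Θ Cinv F b * B (Θ b) (B G H))
        - (∑ b, Tt B Θ Cinv F b * P1 B Θ Cinv (Θ b) G H)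
        - (∑ b, Tt B Θ Cinv F b * NN B Θ Cinv (Θ b) G H)
        + (∑ b, Tt B Θ Cinv F b * P1 B Θ Cinv (Θ b) H G) := by
    rw [bilT]
    have hpt : ∀ b : Fin k, B (B G H + bil B Θ Cinv G H) (Θ b)
        = -(B (Θ b) (B G H)) - P1 B Θ Cinv (Θ b) G H - NN B Θ Cinv (Θ b) G H
          + P1 B Θ Cinv (Θ b) H G := by
      intro b
      rw [hanti (B G H + bil B Θ Cinv G H) (Θ b), Badd_right hanti hadd,
          Bbil hanti hadd hleib hC hCinv hCinv']
      ring
    rw [Finset.sum_congr rfl fun b _ => by rw [hpt b]]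
    simp only [mul_add, mul_sub, mul_neg, Finset.sum_add_distrib, Finset.sum_sub_distrib,
      Finset.sum_neg_distrib]
  rw [part1, part2,
      fact_i hanti hadd hjac hC hCinv' F G H,
      fact_ii hanti hC hCinv' F G H,
      fact_iii F G H,
      fact_ii hanti hC hCinv' F H G]
  ring

end main

end Stmt6Aux

/-- The Dirac bracket is again a Poisson bracket: antisymmetric, a biderivation,
and it satisfies the Jacobi identity strongly (identically in `A`). -/
theorem stmt6 {A : Type*} [CommRing A] (k : ℕ)
    (B : A → A → A)
    (hanti : ∀ a b, B a b = -B b a)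
    (hadd : ∀ a b c, B (a + b) c = B a c + B b c)
    (hleib : ∀ a b c, B a (b * c) = B a b * c + b * B a c)
    (hjac : ∀ a b c, B a (B b c) + B b (B c a) + B c (B a b) = 0)
    (Θ : Fin k → A)
    (C Cinv : Matrix (Fin k) (Fin k) A)
    (hC : ∀ a b, C a b = B (Θ a) (Θ b))
    (hCinv : C * Cinv = 1) (hCinv' : Cinv * C = 1)
    (D : A → A → A)
    (hD : ∀ F G, D F G = B F G - ∑ a, ∑ b, B F (Θ a) * Cinv a b * B (Θ b) G) :
    (∀ F G, D F G = -D G F) ∧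
    (∀ F G H, D F (G * H) = D F G * H + G * D F H) ∧
    (∀ F G H, D (F * G) H = F * D G H + D F H * G) ∧
    (∀ F G H, D F (D G H) + D G (D H F) + D H (D F G) = 0) := by
  have hDb : ∀ F G, D F G = B F G + Stmt6Aux.bil B Θ Cinv F G := by
    intro F G
    rw [hD]
    have h : (∑ a, ∑ b, B F (Θ a) * Cinv a b * B (Θ b) G)
        = -Stmt6Aux.bil B Θ Cinv F G := by
      unfold Stmt6Aux.bil
      rw [show -(∑ a, ∑ b, B F (Θ a) * Cinv a b * B G (Θ b))
          = ∑ a, ∑ b, -(B F (Θ a) * Cinv a b * B G (Θ b)) by simp]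
      refine Finset.sum_congr rfl fun a _ => Finset.sum_congr rfl fun b _ => ?_
      rw [hanti (Θ b) G]; ring
    rw [h]; ring
  have c1 : ∀ F G, D F G = -D G F := by
    intro F G
    rw [hDb, hDb]
    have h2 := Stmt6Aux.bil_antisym hanti hC hCinv' F G
    linear_combination hanti F G + h2
  have c2 : ∀ F G H, D F (G * H) = D F G * H + G * D F H := by
    intro F G H
    rw [hDb, hDb, hDb, hleib, Stmt6Aux.bil_mul_right hanti hleib]
    ring
  have c3 : ∀ F G H, D (F * G) H = F * D G H + D F H * G := by
    intro F G H
    have h2 := c2 H F G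
    have a1 := c1 (F * G) H
    have a2 := c1 F H
    have a3 := c1 G H
    linear_combination a1 - h2 - G * a2 - F * a3
  refine ⟨c1, c2, c3, ?_⟩
  intro F G H
  have expand : ∀ X Y Z : A, D X (D Y Z)
      = B X (B Y Z)
        + Stmt6Aux.P1 B Θ Cinv X Y Z - Stmt6Aux.P1 B Θ Cinv X Z Y
        - Stmt6Aux.P1 B Θ Cinv Y Z X + Stmt6Aux.P1 B Θ Cinv Z Y X
        + Stmt6Aux.NN B Θ Cinv X Y Z
        + Stmt6Aux.QQ B Θ Cinv Y X Z - Stmt6Aux.QQ B Θ Cinv Z X Y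
        - Stmt6Aux.RR B Θ Cinv X Y Z := by
    intro X Y Z
    rw [hDb X (D Y Z), hDb Y Z]
    exact Stmt6Aux.keyD hanti hadd hleib hjac hC hCinv hCinv' X Y Z
  rw [expand F G H, expand G H F, expand H F G]
  have hR := Stmt6Aux.Rcyc (Θ := Θ) (Cinv := Cinv) hjac F G H
  have hN1 := Stmt6Aux.NQ (Θ := Θ) (Cinv := Cinv) hanti hadd hjac F G H
  have hN2 := Stmt6Aux.NQ (Θ := Θ) (Cinv := Cinv) hanti hadd hjac G H F
  have hN3 := Stmt6Aux.NQ (Θ := Θ) (Cinv := Cinv) hanti hadd hjac H F G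
  linear_combination hjac F G H + hN1 + hN2 + hN3 - hR
end

section
/- Let M be a finite-dimensional real vector space with a symplectic bilinear form represented by an invertible antisymmetric matrix E (Poisson bivector with entries E^{AB}). Let Θ : coordinates selecting a set of k linear constraints with {Θᵃ,Θᵇ} = E^{ab} invertible. Define the Dirac bivector E_D^{AB} = E^{AB} − Σ {Γ^A,Θᵃ} E_{ab} {Θᵇ,Γ^B} and the Dirac two-form E^{(D)}_{AB} = E_{AB} − Σ (∂_A Θᵃ) E_{ab} (∂_B Θᵇ), where E_{AB} is the inverse of E^{AB} and E_{ab} the inverse of E^{ab}. Then E_D · E^{(D)} · E_D = E_D and E^{(D)} · E_D · E^{(D)} = E^{(D)}, i.e. E^{(D)} is a compatible two-form for the (degenerate) Dirac structure. -/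
open Matrix

/-- The canonical Dirac two-form is compatible with the Dirac bivector. -/
theorem stmt7 (N k : ℕ)
    (E Elow : Matrix (Fin N) (Fin N) ℝ)
    (hE : Eᵀ = -E)
    (hEinv : E * Elow = 1) (hEinv' : Elow * E = 1)
    (D : Matrix (Fin N) (Fin k) ℝ)  -- columns are the gradients ∂_A Θᵃ
    (C Cinv : Matrix (Fin k) (Fin k) ℝ)
    (hC : C = Dᵀ * E * D)
    (hCinv : C * Cinv = 1) (hCinv' : Cinv * C = 1)
    (ED Elow_D : Matrix (Fin N) (Fin N) ℝ)
    (hED : ED = E - E * D * Cinv * (Dᵀ * E))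
    (hElowD : Elow_D = Elow - D * Cinv * Dᵀ) :
    ED * Elow_D * ED = ED ∧ Elow_D * ED * Elow_D = Elow_D := by
  have key : ∀ X : Matrix (Fin k) (Fin N) ℝ, Dᵀ * (E * (D * X)) = C * X := by
    intro X
    rw [hC, Matrix.mul_assoc, Matrix.mul_assoc]
  have key2 : ∀ X : Matrix (Fin k) (Fin N) ℝ, Cinv * (C * X) = X := by
    intro X; rw [← Matrix.mul_assoc, hCinv', Matrix.one_mul]
  have hEE : ∀ X : Matrix (Fin N) (Fin N) ℝ, E * (Elow * X) = X := by
    intro X; rw [← Matrix.mul_assoc, hEinv, Matrix.one_mul]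
  have hEE' : ∀ X : Matrix (Fin N) (Fin N) ℝ, Elow * (E * X) = X := by
    intro X; rw [← Matrix.mul_assoc, hEinv', Matrix.one_mul]
  have keyC : Dᵀ * (E * D) = C := by rw [hC, Matrix.mul_assoc]
  subst hED hElowD
  constructor <;>
  · simp only [Matrix.sub_mul, Matrix.mul_sub, Matrix.mul_assoc, hEinv, hEinv',
      Matrix.mul_one, Matrix.one_mul, key, key2, hEE, hEE', keyC, hCinv, hCinv']
    abel
end

section
/- Let A be a commutative ring with Poisson bracket {·,·}, let Θ¹,…,Θᵏ ∈ A with C^{ab} = {Θᵃ,Θᵇ} invertible with inverse C_{ab}, and let Λ = (Λᵃ_b) be a k×k matrix over A, invertible over A, with Θ'ᵃ = Σ_b Λᵃ_b Θᵇ. Let I ⊆ A be the ideal generated by Θ¹,…,Θᵏ, and assume the matrix C'^{ab} = {Θ'ᵃ,Θ'ᵇ} is also invertible. Then for all F, G ∈ A, the two Dirac brackets agree modulo I: {F,G}_{D'} − {F,G}_D ∈ I, where {F,G}_D = {F,G} − Σ {F,Θᵃ} C_{ab} {Θᵇ,G} and similarly for the primed constraints. -/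
open Matrix in
private lemma stmt15_aux {R : Type*} [CommRing R] {k : ℕ}
    (L N P : Matrix (Fin k) (Fin k) R) (u v : Fin k → R)
    (h : Lᵀ * N * L = P) :
    ∑ a, ∑ b, (∑ c, L a c * u c) * N a b * (∑ d, L b d * v d)
      = ∑ a, ∑ b, u a * P a b * v b := by
  have h1 : ∑ a, ∑ b, (∑ c, L a c * u c) * N a b * (∑ d, L b d * v d)
      = (L *ᵥ u) ⬝ᵥ (N *ᵥ (L *ᵥ v)) := by
    simp [dotProduct, Matrix.mulVec, Finset.mul_sum, Finset.sum_mul, mul_assoc]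
  have h2 : ∑ a, ∑ b, u a * P a b * v b = (u ᵥ* P) ⬝ᵥ v := by
    simp only [dotProduct, Matrix.vecMul, Finset.sum_mul]
    rw [Finset.sum_comm]
  rw [h1, h2, ← Matrix.vecMul_transpose, Matrix.dotProduct_mulVec, Matrix.vecMul_vecMul,
    Matrix.dotProduct_mulVec, Matrix.vecMul_vecMul, h]

open Matrix in
/-- On-shell invariance of the Dirac bracket under reparametrization
`Θ → Θ' = Λ Θ` of the second-class constraints. -/
theorem stmt15 {A : Type*} [CommRing A] (k : ℕ)
    (B : A → A → A)
    (hanti : ∀ a b, B a b = -B b a)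
    (hadd : ∀ a b c, B (a + b) c = B a c + B b c)
    (hleib : ∀ a b c, B a (b * c) = B a b * c + b * B a c)
    (hjac : ∀ a b c, B a (B b c) + B b (B c a) + B c (B a b) = 0)
    (Θ Θ' : Fin k → A)
    (Λ : Matrix (Fin k) (Fin k) A) (hΛ : IsUnit Λ)
    (hΘ' : ∀ a, Θ' a = ∑ b, Λ a b * Θ b)
    (C Cinv C' C'inv : Matrix (Fin k) (Fin k) A)
    (hC : ∀ a b, C a b = B (Θ a) (Θ b))
    (hCinv : C * Cinv = 1) (hCinv' : Cinv * C = 1)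
    (hC' : ∀ a b, C' a b = B (Θ' a) (Θ' b))
    (hC'inv : C' * C'inv = 1) (hC'inv' : C'inv * C' = 1) :
    ∀ F G : A,
      ((B F G - ∑ a, ∑ b, B F (Θ' a) * C'inv a b * B (Θ' b) G) -
       (B F G - ∑ a, ∑ b, B F (Θ a) * Cinv a b * B (Θ b) G)) ∈
        Ideal.span (Set.range Θ) := by
  intro F G
  set I := Ideal.span (Set.range Θ) with hI
  let φ : A →+* A ⧸ I := Ideal.Quotient.mk I
  rw [← Ideal.Quotient.eq_zero_iff_mem]
  show φ _ = 0
  -- basic consequences of the bracket axioms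
  have hzero1 : ∀ a, B 0 a = 0 := by
    intro a
    have h : B 0 a = B 0 a + B 0 a := by
      have := hadd 0 0 a; simpa using this
    exact (left_eq_add.mp h)
  have hsum1 : ∀ {ι : Type} (s : Finset ι) (f : ι → A) (c : A),
      B (∑ i ∈ s, f i) c = ∑ i ∈ s, B (f i) c := by
    intro ι s f c
    induction s using Finset.cons_induction with
    | empty => simpa using hzero1 c
    | cons i s hi ih => rw [Finset.sum_cons, Finset.sum_cons, hadd, ih]
  have hsum2 : ∀ (c : A) {ι : Type} (s : Finset ι) (f : ι → A),
      B c (∑ i ∈ s, f i) = ∑ i ∈ s, B c (f i) := by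
    intro c ι s f
    rw [hanti, hsum1, ← Finset.sum_neg_distrib]
    exact Finset.sum_congr rfl fun i _ => (hanti c (f i)).symm
  have hφΘ : ∀ a, φ (Θ a) = 0 := fun a =>
    Ideal.Quotient.eq_zero_iff_mem.mpr (Ideal.subset_span ⟨a, rfl⟩)
  -- bracket with Θ' mod I
  have hu' : ∀ (x : A) (a : Fin k),
      φ (B x (Θ' a)) = ∑ c, φ (Λ a c) * φ (B x (Θ c)) := by
    intro x a
    rw [hΘ' a, hsum2, map_sum]
    refine Finset.sum_congr rfl fun c _ => ?_
    rw [hleib, map_add, _root_.map_mul, _root_.map_mul, hφΘ, mul_zero, zero_add]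
  have hv' : ∀ (x : A) (b : Fin k),
      φ (B (Θ' b) x) = ∑ d, φ (Λ b d) * φ (B (Θ d) x) := by
    intro x b
    rw [hanti (Θ' b) x, map_neg, hu', ← Finset.sum_neg_distrib]
    refine Finset.sum_congr rfl fun d _ => ?_
    rw [hanti (Θ d) x, map_neg]
    ring
  -- matrices over the quotient
  set R := A ⧸ I
  set L : Matrix (Fin k) (Fin k) R := Λ.map φ with hLdef
  set M : Matrix (Fin k) (Fin k) R := C.map φ with hMdef
  set Minv : Matrix (Fin k) (Fin k) R := Cinv.map φ with hMinvdef
  set M' : Matrix (Fin k) (Fin k) R := C'.map φ with hM'def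
  set M'inv : Matrix (Fin k) (Fin k) R := C'inv.map φ with hM'invdef
  have hmapmul : ∀ (X Y : Matrix (Fin k) (Fin k) A),
      (X * Y).map φ = X.map φ * Y.map φ := fun X Y => by
    simpa [RingHom.mapMatrix_apply] using map_mul φ.mapMatrix X Y
  have hMMinv : Minv * M = 1 := by
    have := congrArg (Matrix.map · φ) hCinv'
    simpa [hmapmul] using this
  have hM'M'inv : M' * M'inv = 1 := by
    have := congrArg (Matrix.map · φ) hC'inv
    simpa [hmapmul] using this
  have hLu : IsUnit L := by
    have := hΛ.map (RingHom.mapMatrix (m := Fin k) φ)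
    simpa [RingHom.mapMatrix_apply] using this
  obtain ⟨uL, huL⟩ := hLu
  set Linv : Matrix (Fin k) (Fin k) R := ↑uL⁻¹ with hLinvdef
  have hLL : L * Linv = 1 := by rw [← huL]; exact uL.mul_inv
  have hLL' : Linv * L = 1 := by rw [← huL]; exact uL.inv_mul
  -- C' ≡ Λ C Λᵀ mod I
  have entry : ∀ a b, φ (C' a b) = ∑ c, ∑ d, φ (Λ a c) * (φ (Λ b d) * φ (C c d)) := by
    intro a b
    rw [hC', hv' (Θ' b) a]
    refine Finset.sum_congr rfl fun c _ => ?_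
    rw [hu' (Θ c) b, Finset.mul_sum]
    refine Finset.sum_congr rfl fun d _ => ?_
    rw [hC]
  have hM'eq : M' = L * M * Lᵀ := by
    ext a b
    rw [hM'def, Matrix.map_apply, entry]
    simp only [Matrix.mul_apply, Matrix.transpose_apply, hLdef, hMdef, Matrix.map_apply,
      Finset.sum_mul, Finset.mul_sum]
    rw [Finset.sum_comm]
    refine Finset.sum_congr rfl fun c _ => by
      rw [Finset.sum_mul]; exact Finset.sum_congr rfl fun d _ => by ring
  -- key matrix identity
  have hTM : Lᵀ * M'inv = Minv * Linv := by
    have h1 : L * M * Lᵀ * M'inv = 1 := by rw [← hM'eq]; exact hM'M'inv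
    have h2 : M * Lᵀ * M'inv = Linv := by
      have h := congrArg (fun X => Linv * X) h1
      simpa [← mul_assoc, hLL'] using h
    have h3 := congrArg (fun X => Minv * X) h2
    simpa [← mul_assoc, hMMinv] using h3
  have hkey : Lᵀ * M'inv * L = Minv := by
    rw [hTM, mul_assoc, hLL', mul_one]
  -- assemble
  set u : Fin k → R := fun a => φ (B F (Θ a)) with hudef
  set v : Fin k → R := fun b => φ (B (Θ b) G) with hvdef
  have hS' : φ (∑ a, ∑ b, B F (Θ' a) * C'inv a b * B (Θ' b) G)
      = ∑ a, ∑ b, (∑ c, L a c * u c) * M'inv a b * (∑ d, L b d * v d) := by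
    rw [_root_.map_sum]
    refine Finset.sum_congr rfl fun a _ => ?_
    rw [_root_.map_sum]
    refine Finset.sum_congr rfl fun b _ => ?_
    rw [_root_.map_mul, _root_.map_mul, hu', hv']
    rfl
  have hS : φ (∑ a, ∑ b, B F (Θ a) * Cinv a b * B (Θ b) G)
      = ∑ a, ∑ b, u a * Minv a b * v b := by
    rw [_root_.map_sum]
    refine Finset.sum_congr rfl fun a _ => ?_
    rw [_root_.map_sum]
    refine Finset.sum_congr rfl fun b _ => ?_
    rw [_root_.map_mul, _root_.map_mul]
    rfl
  rw [map_sub, map_sub, map_sub, hS', hS, stmt15_aux L M'inv Minv u v hkey]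
  ring
end
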